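/- Let (μ_n) be a sequence of compactly supported Borel probability measures on ℝ converging in moments to a compactly supported Borel probability measure μ on ℝ, and let C > 0 be such that the support of μ is contained in the open interval (−C, C). Let f : ℝ → ℝ be a Borel function for which there exist M > 0 and r ∈ ℕ with |f(t)| ≤ M(t^{2r} + 1) for all t ∈ ℝ. Then lim_{n→∞} ∫_{{|t| ≥ C}} f dμ_n = 0. -/

import Mathlib

open MeasureTheory Filter Topology

lemma aux_integrable_pow {ν : Measure ℝ} [IsProbabilityMeasure ν] {K : Set ℝ}
    (hK : IsCompact K) (h0 : ν Kᶜ = 0) (p : ℕ) :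
    Integrable (fun t : ℝ => t ^ p) ν := by
  have hmem : ∀ᵐ x ∂ν, x ∈ K := by
    rw [ae_iff]
    exact h0
  have h : ν.restrict K = ν := Measure.restrict_eq_self_of_ae_mem hmem
  have : IntegrableOn (fun t : ℝ => t ^ p) K ν :=
    (continuous_pow p).continuousOn.integrableOn_compact hK
  rwa [IntegrableOn, h] at this

theorem stmt1 (μ : Measure ℝ) [IsProbabilityMeasure μ]
    (μs : ℕ → Measure ℝ) [∀ n, IsProbabilityMeasure (μs n)]
    (hcomp : ∃ K : Set ℝ, IsCompact K ∧ μ Kᶜ = 0)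
    (hcompn : ∀ n, ∃ K : Set ℝ, IsCompact K ∧ μs n Kᶜ = 0)
    (C : ℝ) (hC : 0 < C)
    (hsupp : ∀ x : ℝ, x ∉ Set.Ioo (-C) C → ∃ U ∈ 𝓝 x, μ U = 0)
    (hmom : ∀ p : ℕ,
      Tendsto (fun n => ∫ t, t ^ p ∂(μs n)) atTop (𝓝 (∫ t, t ^ p ∂μ)))
    (f : ℝ → ℝ) (hf : Measurable f)
    (M : ℝ) (hM : 0 < M) (r : ℕ)
    (hbound : ∀ t : ℝ, |f t| ≤ M * (t ^ (2 * r) + 1)) :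
    Tendsto (fun n => ∫ t in {t : ℝ | C ≤ |t|}, f t ∂(μs n)) atTop (𝓝 0) := by
  obtain ⟨K, hKc, hK0⟩ := hcomp
  have hCne : C ≠ 0 := ne_of_gt hC
  have hpow_nonneg : ∀ (t : ℝ) (p : ℕ), (0:ℝ) ≤ t ^ (2 * p) := by
    intro t p; rw [pow_mul]; positivity
  -- the even-power polynomial envelope
  set F : ℕ → ℝ → ℝ := fun m t => M * ((t ^ (2 * r) + 1) * (t ^ 2 / C ^ 2) ^ m) with hF
  have hFeq : ∀ m t, F m t = (M / C ^ (2 * m)) * (t ^ (2 * (r + m)) + t ^ (2 * m)) := by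
    intro m t
    have h1 : (C:ℝ) ^ (2 * m) ≠ 0 := pow_ne_zero _ hCne
    simp only [hF]
    rw [div_pow, ← pow_mul, ← pow_mul, Nat.mul_add, pow_add]
    field_simp
    try ring
  have hFcont : ∀ m, Continuous (F m) := by
    intro m; simp only [hF]; fun_prop
  have hFnonneg : ∀ m t, 0 ≤ F m t := by
    intro m t
    have := hpow_nonneg t r
    have h2 : (0:ℝ) ≤ (t ^ 2 / C ^ 2) ^ m := by positivity
    have h3 : (0:ℝ) ≤ t ^ (2*r) + 1 := by linarith
    positivity
  -- integrability of F m w.r.t. any compactly supported prob measure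
  have hFint : ∀ m (ν : Measure ℝ) [IsProbabilityMeasure ν],
      (∃ K : Set ℝ, IsCompact K ∧ ν Kᶜ = 0) → Integrable (F m) ν := by
    intro m ν _ ⟨K', hK'c, hK'0⟩
    have h := ((aux_integrable_pow hK'c hK'0 (2 * (r + m))).add
      (aux_integrable_pow hK'c hK'0 (2 * m))).const_mul (M / C ^ (2 * m))
    refine h.congr (Eventually.of_forall fun t => ?_)
    exact (hFeq m t).symm
  -- a.e. |t| < C for μ :  the complement of Ioo (-C) C is μ-null
  have hnull : μ (Set.Ioo (-C) C)ᶜ = 0 := by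
    classical
    set T := (Set.Ioo (-C) C)ᶜ ∩ K with hT
    have hTc : IsCompact T := hKc.inter_left (isOpen_Ioo.isClosed_compl)
    set U : ℝ → Set ℝ := fun x =>
      if h : x ∈ Set.Ioo (-C) C then Set.univ else (hsupp x h).choose with hU
    have hUnhds : ∀ x ∈ T, U x ∈ 𝓝 x := by
      intro x hx
      have hx' : x ∉ Set.Ioo (-C) C := hx.1
      simp only [hU, dif_neg hx']
      exact (hsupp x hx').choose_spec.1
    have hUnull : ∀ x ∉ Set.Ioo (-C) C, μ (U x) = 0 := by
      intro x hx
      simp only [hU, dif_neg hx]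
      exact (hsupp x hx).choose_spec.2
    obtain ⟨s, hsT, hcov⟩ := hTc.elim_nhds_subcover U hUnhds
    have hTnull : μ T = 0 := by
      refine measure_mono_null hcov ?_
      refine (measure_biUnion_null_iff s.countable_toSet).2 fun x hx => ?_
      exact hUnull x (hsT x hx).1
    have : (Set.Ioo (-C) C)ᶜ ⊆ T ∪ Kᶜ := by
      intro x hx
      by_cases hxK : x ∈ K
      · exact Or.inl ⟨hx, hxK⟩
      · exact Or.inr hxK
    exact measure_mono_null this (measure_union_null hTnull hK0)
  have hSeq : {t : ℝ | C ≤ |t|} = (Set.Ioo (-C) C)ᶜ := by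
    ext t
    simp only [Set.mem_setOf_eq, Set.mem_compl_iff, Set.mem_Ioo, not_and_or, not_lt, le_abs]
    constructor
    · rintro (h | h)
      · exact Or.inr h
      · exact Or.inl (by linarith)
    · rintro (h | h)
      · exact Or.inr (by linarith)
      · exact Or.inl h
  have hae : ∀ᵐ t ∂μ, |t| < C := by
    rw [ae_iff]
    have he : {t : ℝ | ¬ |t| < C} = {t : ℝ | C ≤ |t|} := by simp [not_lt]
    rw [he, hSeq]
    exact hnull
  -- the dominated convergence in m for μ
  have hB : Tendsto (fun m => ∫ t, F m t ∂μ) atTop (𝓝 0) := by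
    have h0 : (0:ℝ) = ∫ t, (0:ℝ) ∂μ := by simp
    rw [h0]
    refine tendsto_integral_of_dominated_convergence (fun t => M * (t ^ (2 * r) + 1))
      (fun m => (hFcont m).aestronglyMeasurable) ?_ ?_ ?_
    · have := ((aux_integrable_pow hKc hK0 (2 * r)).add (integrable_const 1)).const_mul M
      exact this.congr (Eventually.of_forall fun t => by simp)
    · intro m
      filter_upwards [hae] with t ht
      have h1 : 0 ≤ t ^ (2*r) + 1 := by have := hpow_nonneg t r; linarith
      have hq : t ^ 2 / C ^ 2 ≤ 1 := by
        rw [div_le_one (by positivity)]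
        calc t ^ 2 = |t| ^ 2 := (sq_abs t).symm
        _ ≤ C ^ 2 := by apply pow_le_pow_left₀ (abs_nonneg t) ht.le
      have hq0 : 0 ≤ t ^ 2 / C ^ 2 := by positivity
      have h2 : (t ^ 2 / C ^ 2) ^ m ≤ 1 := pow_le_one₀ hq0 hq
      have h3 : 0 ≤ (t ^ 2 / C ^ 2) ^ m := pow_nonneg hq0 m
      rw [Real.norm_eq_abs, abs_of_nonneg (hFnonneg m t)]
      simp only [hF]
      calc M * ((t ^ (2*r) + 1) * (t ^ 2 / C ^ 2) ^ m)
          ≤ M * ((t ^ (2*r) + 1) * 1) := by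
            apply mul_le_mul_of_nonneg_left _ hM.le
            exact mul_le_mul_of_nonneg_left h2 h1
        _ = M * (t ^ (2*r) + 1) := by ring
    · filter_upwards [hae] with t ht
      have hq : |t ^ 2 / C ^ 2| < 1 := by
        rw [abs_of_nonneg (by positivity), div_lt_one (by positivity)]
        calc t ^ 2 = |t| ^ 2 := (sq_abs t).symm
        _ < C ^ 2 := by apply pow_lt_pow_left₀ ht (abs_nonneg t); norm_num
      have := tendsto_pow_atTop_nhds_zero_of_abs_lt_one hq
      have h2 := this.const_mul (M * (t ^ (2*r) + 1))
      rw [mul_zero] at h2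
      refine h2.congr fun m => ?_
      simp only [hF]; ring
  -- convergence in n, for each fixed m
  have hA : ∀ m, Tendsto (fun n => ∫ t, F m t ∂(μs n)) atTop (𝓝 (∫ t, F m t ∂μ)) := by
    intro m
    have h1 := ((hmom (2 * (r + m))).add (hmom (2 * m))).const_mul (M / C ^ (2 * m))
    have he : ∀ (ν : Measure ℝ) [IsProbabilityMeasure ν],
        (∃ K : Set ℝ, IsCompact K ∧ ν Kᶜ = 0) →
        ∫ t, F m t ∂ν = (M / C ^ (2*m)) * ((∫ t, t ^ (2*(r+m)) ∂ν) + ∫ t, t ^ (2*m) ∂ν) := by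
      intro ν _ ⟨K', hK'c, hK'0⟩
      rw [← integral_add (aux_integrable_pow hK'c hK'0 _) (aux_integrable_pow hK'c hK'0 _),
        ← integral_const_mul]
      exact integral_congr_ae (Eventually.of_forall fun t => hFeq m t)
    rw [he μ ⟨K, hKc, hK0⟩]
    refine h1.congr fun n => ?_
    rw [he (μs n) (hcompn n)]
  -- the key bound
  have hkey : ∀ n m, ‖∫ t in {t : ℝ | C ≤ |t|}, f t ∂(μs n)‖ ≤ ∫ t, F m t ∂(μs n) := by
    intro n m
    obtain ⟨K', hK'c, hK'0⟩ := hcompn n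
    have hS : MeasurableSet {t : ℝ | C ≤ |t|} := by
      rw [hSeq]; exact measurableSet_Ioo.compl
    have hgint : Integrable (fun t : ℝ => M * (t ^ (2*r) + 1)) (μs n) :=
      (((aux_integrable_pow hK'c hK'0 (2*r)).add (integrable_const 1)).const_mul M).congr
        (Eventually.of_forall fun t => by simp)
    have hfint : Integrable f (μs n) := by
      refine hgint.mono' hf.aestronglyMeasurable (Eventually.of_forall fun t => ?_)
      rw [Real.norm_eq_abs]; exact hbound t
    have hFi : Integrable (F m) (μs n) := hFint m (μs n) ⟨K', hK'c, hK'0⟩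
    calc ‖∫ t in {t : ℝ | C ≤ |t|}, f t ∂(μs n)‖
        ≤ ∫ t in {t : ℝ | C ≤ |t|}, ‖f t‖ ∂(μs n) := norm_integral_le_integral_norm _
      _ ≤ ∫ t in {t : ℝ | C ≤ |t|}, F m t ∂(μs n) := by
          refine setIntegral_mono_on (hfint.norm.integrableOn) (hFi.integrableOn) hS ?_
          intro t ht
          simp only [Set.mem_setOf_eq] at ht
          have h1 : 0 ≤ t ^ (2*r) + 1 := by have := hpow_nonneg t r; linarith
          have hq : 1 ≤ t ^ 2 / C ^ 2 := by
            rw [le_div_iff₀ (by positivity), one_mul]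
            calc C ^ 2 ≤ |t| ^ 2 := by apply pow_le_pow_left₀ hC.le ht
            _ = t ^ 2 := sq_abs t
          have h2 : 1 ≤ (t ^ 2 / C ^ 2) ^ m := one_le_pow₀ hq
          rw [Real.norm_eq_abs]
          calc |f t| ≤ M * (t ^ (2*r) + 1) := hbound t
            _ = M * ((t ^ (2*r) + 1) * 1) := by ring
            _ ≤ M * ((t ^ (2*r) + 1) * (t ^ 2 / C ^ 2) ^ m) := by
                apply mul_le_mul_of_nonneg_left _ hM.le
                exact mul_le_mul_of_nonneg_left h2 h1
      _ ≤ ∫ t, F m t ∂(μs n) :=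
          setIntegral_le_integral hFi (Eventually.of_forall fun t => hFnonneg m t)
  -- conclude
  rw [NormedAddCommGroup.tendsto_nhds_zero]
  intro ε hε
  obtain ⟨m, hm⟩ := (hB.eventually (gt_mem_nhds hε)).exists
  filter_upwards [(hA m).eventually (gt_mem_nhds hm)] with n hn
  exact lt_of_le_of_lt (hkey n m) hn
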